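/- Let X, X', Y, Y' be measurable spaces, R ⊆ X × Y and Q ⊆ X' × Y' relations, μ₁ and μ₂ probability measures on X and Y respectively, and h : X → Measure X', k : Y → Measure Y' measurable functions all of whose values are probability measures. If dp(ε,δ)(R)(μ₁, μ₂) holds and dp(ε',δ')(Q)(h x, k y) holds for every (x,y) ∈ R, then dp(ε+ε', δ+δ')(Q)(μ₁.bind h, μ₂.bind k). (This is the Kleisli/multiplication law of the graded relational lifting for differential privacy.) -/

import Mathlib

open MeasureTheory ENNReal

/-- The `(ε,δ)`-closeness condition on distributions over `Bool`:
`ν₁ {false} ≤ exp ε · ν₂ {false} + δ`. -/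
def Scond (ε δ : NNReal) (ν₁ ν₂ : Measure Bool) : Prop :=
  ν₁ {false} ≤ ENNReal.ofReal (Real.exp ε) * ν₂ {false} + δ

/-- The graded relational lifting for differential privacy. -/
def dp {X Y : Type*} [MeasurableSpace X] [MeasurableSpace Y]
    (ε δ : NNReal) (R : Set (X × Y)) (μ₁ : Measure X) (μ₂ : Measure Y) : Prop :=
  ∀ (ε' δ' : NNReal) (f : X → Measure Bool) (g : Y → Measure Bool),
    Measurable f → Measurable g →
    (∀ x, IsProbabilityMeasure (f x)) → (∀ y, IsProbabilityMeasure (g y)) →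
    (∀ x y, (x, y) ∈ R → Scond ε' δ' (f x) (g y)) →
    Scond (ε + ε') (δ + δ') (μ₁.bind f) (μ₂.bind g)

/-- Kleisli/multiplication law of the graded relational lifting for differential privacy. -/
theorem dp_bind {X X' Y Y' : Type*} [MeasurableSpace X] [MeasurableSpace X']
    [MeasurableSpace Y] [MeasurableSpace Y']
    (R : Set (X × Y)) (Q : Set (X' × Y')) (ε δ ε' δ' : NNReal)
    (μ₁ : Measure X) (μ₂ : Measure Y)
    [IsProbabilityMeasure μ₁] [IsProbabilityMeasure μ₂]
    (h : X → Measure X') (k : Y → Measure Y')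
    (hh : Measurable h) (hk : Measurable k)
    (hhp : ∀ x, IsProbabilityMeasure (h x)) (hkp : ∀ y, IsProbabilityMeasure (k y))
    (hR : dp ε δ R μ₁ μ₂)
    (hQ : ∀ x y, (x, y) ∈ R → dp ε' δ' Q (h x) (k y)) :
    dp (ε + ε') (δ + δ') Q (μ₁.bind h) (μ₂.bind k) := by
  intro ε'' δ'' f g hf hg hfp hgp hS
  have hbX : ∀ x, IsProbabilityMeasure ((h x).bind f) := by
    intro x
    constructor
    rw [Measure.bind_apply MeasurableSet.univ hf.aemeasurable]
    have := hhp x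
    simp only [measure_univ, MeasureTheory.lintegral_one]
  have hbY : ∀ y, IsProbabilityMeasure ((k y).bind g) := by
    intro y
    constructor
    rw [Measure.bind_apply MeasurableSet.univ hg.aemeasurable]
    have := hkp y
    simp only [measure_univ, MeasureTheory.lintegral_one]
  have key := hR (ε' + ε'') (δ' + δ'')
    (fun x => (h x).bind f) (fun y => (k y).bind g)
    ((Measure.measurable_bind' hf).comp hh)
    ((Measure.measurable_bind' hg).comp hk)
    hbX hbY
    (fun x y hxy => hQ x y hxy ε'' δ'' f g hf hg hfp hgp hS)
  rw [Measure.bind_bind hh.aemeasurable hf.aemeasurable, Measure.bind_bind hk.aemeasurable hg.aemeasurable]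
  have e1 : ε + ε' + ε'' = ε + (ε' + ε'') := by ring
  have e2 : δ + δ' + δ'' = δ + (δ' + δ'') := by ring
  rw [e1, e2]
  exact key
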